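/- Let H be a finite-dimensional real inner product space, B a set of unit-norm atoms that is centrally symmetric and spanning, k > 1 an integer, A the k-simple subset relative to B, and suppose (H, A, ‖·‖_B) is a compressed sensing space with bound L > 0. Let Φ : H → ℝ^m be a linear map having the (k, α, β)-generalized-weaken-RIP for distortions α, β > 0 with α ≤ β, and suppose there exists ρ with √((β² − α²)/(α²(k−1))) < ρ < 1/(4L). Then every x♮ ∈ A is exactly recovered from its noiseless measurements: any minimizer x* of ‖x‖_B subject to Φx = Φx♮ satisfies x* = x♮. -/

import Mathlib

open scoped BigOperators RealInnerProductSpace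

/-- The atom norm induced by a set of atoms `B`. -/
noncomputable def atomNorm {H : Type*} [AddCommGroup H] [Module ℝ H] (B : Set H) (x : H) : ℝ :=
  sInf { r : ℝ | ∃ (S : Finset H) (σ : H → ℝ), ↑S ⊆ B ∧ (∀ b ∈ S, 0 ≤ σ b) ∧
    x = ∑ b ∈ S, σ b • b ∧ r = ∑ b ∈ S, σ b }

/-- The `k`-simple subset relative to a set of atoms `B`. -/
def simpleSet {H : Type*} [AddCommGroup H] [Module ℝ H] (B : Set H) (k : ℕ) : Set H :=
  { x | ∃ (σ : Fin k → ℝ) (b : Fin k → H),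
      (∀ i, 0 ≤ σ i) ∧ (∀ i, b i ∈ B) ∧ x = ∑ i, σ i • b i }

/-- `B` spans `H` via finite nonnegative combinations. -/
def Spans {H : Type*} [AddCommGroup H] [Module ℝ H] (B : Set H) : Prop :=
  ∀ x : H, ∃ (S : Finset H) (σ : H → ℝ), ↑S ⊆ B ∧ (∀ b ∈ S, 0 ≤ σ b) ∧
    x = ∑ b ∈ S, σ b • b

/-- `(H, A, ‖·‖_B)` is a compressed sensing space with bound `L`. -/
def IsCSSpace {H : Type*} [NormedAddCommGroup H] [InnerProductSpace ℝ H]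
    (B A : Set H) (L : ℝ) : Prop :=
  (0 : H) ∈ A ∧ ∀ a ∈ A, ∀ v : H, ∃ z₁ z₂ : H, v = z₁ + z₂ ∧
    atomNorm B (a + z₁) = atomNorm B a + atomNorm B z₁ ∧ atomNorm B z₂ ≤ L * ‖v‖

/-- The dual norm of the atom norm. -/
noncomputable def dualNorm {H : Type*} [NormedAddCommGroup H] [InnerProductSpace ℝ H]
    (B : Set H) (y : H) : ℝ :=
  sSup { r : ℝ | ∃ x : H, atomNorm B x ≤ 1 ∧ r = ⟪x, y⟫ }

namespace WRIPaux

section basic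
variable {H : Type*} [AddCommGroup H] [Module ℝ H] {B : Set H}

lemma atomNorm_nonneg (B : Set H) (x : H) : 0 ≤ atomNorm B x := by
  apply Real.sInf_nonneg
  rintro r ⟨S, σ, -, hσ, -, rfl⟩
  exact Finset.sum_nonneg hσ

lemma bddBelow_atomSet (B : Set H) (x : H) :
    BddBelow { r : ℝ | ∃ (S : Finset H) (σ : H → ℝ), ↑S ⊆ B ∧ (∀ b ∈ S, 0 ≤ σ b) ∧
      x = ∑ b ∈ S, σ b • b ∧ r = ∑ b ∈ S, σ b } := by
  refine ⟨0, ?_⟩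
  rintro r ⟨S, σ, -, hσ, -, rfl⟩
  exact Finset.sum_nonneg hσ

lemma atomNorm_le {x : H} {S : Finset H} {σ : H → ℝ}
    (hS : ↑S ⊆ B) (hσ : ∀ b ∈ S, 0 ≤ σ b) (hx : x = ∑ b ∈ S, σ b • b) :
    atomNorm B x ≤ ∑ b ∈ S, σ b :=
  csInf_le (bddBelow_atomSet B x) ⟨S, σ, hS, hσ, hx, rfl⟩

lemma atomSet_nonempty (hBspan : Spans B) (x : H) :
    Set.Nonempty { r : ℝ | ∃ (S : Finset H) (σ : H → ℝ), ↑S ⊆ B ∧ (∀ b ∈ S, 0 ≤ σ b) ∧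
      x = ∑ b ∈ S, σ b • b ∧ r = ∑ b ∈ S, σ b } := by
  obtain ⟨S, σ, h1, h2, h3⟩ := hBspan x
  exact ⟨_, S, σ, h1, h2, h3, rfl⟩

lemma exists_decomp_lt (hBspan : Spans B) (x : H) {ε : ℝ} (hε : 0 < ε) :
    ∃ (S : Finset H) (σ : H → ℝ), ↑S ⊆ B ∧ (∀ b ∈ S, 0 ≤ σ b) ∧
      x = ∑ b ∈ S, σ b • b ∧ ∑ b ∈ S, σ b < atomNorm B x + ε := by
  obtain ⟨r, hr, hlt⟩ := Real.lt_sInf_add_pos (atomSet_nonempty hBspan x) hε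
  obtain ⟨S, σ, h1, h2, h3, rfl⟩ := hr
  exact ⟨S, σ, h1, h2, h3, hlt⟩

lemma atomNorm_add_le (hBspan : Spans B) (x y : H) :
    atomNorm B (x + y) ≤ atomNorm B x + atomNorm B y := by
  classical
  refine le_of_forall_pos_le_add fun ε hε => ?_
  obtain ⟨S₁, σ₁, hS₁, hσ₁, hx, hs₁⟩ := exists_decomp_lt hBspan x (half_pos hε)
  obtain ⟨S₂, σ₂, hS₂, hσ₂, hy, hs₂⟩ := exists_decomp_lt hBspan y (half_pos hε)
  have h₁v : ∑ b ∈ S₁ ∪ S₂, (if b ∈ S₁ then σ₁ b else 0) • b = ∑ b ∈ S₁, σ₁ b • b := by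
    rw [← Finset.sum_subset Finset.subset_union_left
      (fun b _ hb => by rw [if_neg hb, zero_smul])]
    exact Finset.sum_congr rfl fun b hb => by rw [if_pos hb]
  have h₂v : ∑ b ∈ S₁ ∪ S₂, (if b ∈ S₂ then σ₂ b else 0) • b = ∑ b ∈ S₂, σ₂ b • b := by
    rw [← Finset.sum_subset Finset.subset_union_right
      (fun b _ hb => by rw [if_neg hb, zero_smul])]
    exact Finset.sum_congr rfl fun b hb => by rw [if_pos hb]
  have h₁s : ∑ b ∈ S₁ ∪ S₂, (if b ∈ S₁ then σ₁ b else 0) = ∑ b ∈ S₁, σ₁ b := by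
    rw [← Finset.sum_subset Finset.subset_union_left
      (fun b _ hb => by rw [if_neg hb])]
    exact Finset.sum_congr rfl fun b hb => by rw [if_pos hb]
  have h₂s : ∑ b ∈ S₁ ∪ S₂, (if b ∈ S₂ then σ₂ b else 0) = ∑ b ∈ S₂, σ₂ b := by
    rw [← Finset.sum_subset Finset.subset_union_right
      (fun b _ hb => by rw [if_neg hb])]
    exact Finset.sum_congr rfl fun b hb => by rw [if_pos hb]
  have hle : atomNorm B (x + y) ≤
      ∑ b ∈ S₁ ∪ S₂, ((if b ∈ S₁ then σ₁ b else 0) + (if b ∈ S₂ then σ₂ b else 0)) := by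
    refine atomNorm_le ?_ ?_ ?_
    · rw [Finset.coe_union]
      exact Set.union_subset hS₁ hS₂
    · intro b _
      have a1 : 0 ≤ (if b ∈ S₁ then σ₁ b else 0) := by
        split_ifs with h; exacts [hσ₁ b h, le_refl 0]
      have a2 : 0 ≤ (if b ∈ S₂ then σ₂ b else 0) := by
        split_ifs with h; exacts [hσ₂ b h, le_refl 0]
      linarith
    · simp only [add_smul, Finset.sum_add_distrib, h₁v, h₂v]
      rw [hx, hy]
  rw [Finset.sum_add_distrib, h₁s, h₂s] at hle
  linarith

lemma atomNorm_neg_le (hBsym : ∀ b ∈ B, -b ∈ B) (hBspan : Spans B) (x : H) :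
    atomNorm B (-x) ≤ atomNorm B x := by
  classical
  refine le_csInf (atomSet_nonempty hBspan x) ?_
  rintro r ⟨S, σ, hS, hσ, hx, rfl⟩
  have hinj : ∀ a ∈ S, ∀ b ∈ S, -a = -b → a = b := fun a _ b _ h => neg_injective h
  have hle : atomNorm B (-x) ≤ ∑ b ∈ S.image (fun b => -b), σ (-b) := by
    refine atomNorm_le ?_ ?_ ?_
    · intro b hb
      simp only [Finset.coe_image, Set.mem_image, Finset.mem_coe] at hb
      obtain ⟨a, ha, rfl⟩ := hb
      exact hBsym a (hS ha)
    · intro b hb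
      simp only [Finset.mem_image] at hb
      obtain ⟨a, ha, rfl⟩ := hb
      rw [neg_neg]
      exact hσ a ha
    · rw [Finset.sum_image hinj, hx]
      simp [smul_neg, neg_neg, ← Finset.sum_neg_distrib]
  rw [Finset.sum_image hinj] at hle
  simpa using hle

end basic

lemma marg_one {k : ℕ} (S : Finset ι) (σ x : ι → ℝ) (t₀ : Fin k) :
    ∑ g ∈ Fintype.piFinset (fun _ : Fin k => S), (∏ t, σ (g t)) * x (g t₀)
      = (∑ b ∈ S, σ b) ^ (k - 1) * ∑ b ∈ S, σ b * x b := by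
  have hterm : ∀ g : Fin k → ι, (∏ t, σ (g t)) * x (g t₀)
      = ∏ t, (σ (g t) * (if t = t₀ then x (g t) else 1)) := by
    intro g
    rw [Finset.prod_mul_distrib, Finset.prod_ite_eq' Finset.univ t₀ (fun t => x (g t)),
      if_pos (Finset.mem_univ _)]
  calc ∑ g ∈ Fintype.piFinset (fun _ : Fin k => S), (∏ t, σ (g t)) * x (g t₀)
      = ∑ g ∈ Fintype.piFinset (fun _ : Fin k => S),
          ∏ t, (σ (g t) * (if t = t₀ then x (g t) else 1)) :=
        Finset.sum_congr rfl fun g _ => hterm g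
    _ = ∏ t : Fin k, ∑ b ∈ S, (σ b * (if t = t₀ then x b else 1)) :=
        (Finset.prod_univ_sum (fun _ => S) (fun t b => σ b * (if t = t₀ then x b else 1))).symm
    _ = (∑ b ∈ S, σ b) ^ (k - 1) * ∑ b ∈ S, σ b * x b := by
        rw [← Finset.mul_prod_erase Finset.univ _ (Finset.mem_univ t₀)]
        have h1 : ∑ b ∈ S, σ b * (if t₀ = t₀ then x b else 1) = ∑ b ∈ S, σ b * x b := by simp
        have h2 : ∏ t ∈ Finset.univ.erase t₀, (∑ b ∈ S, σ b * (if t = t₀ then x b else 1))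
            = (∑ b ∈ S, σ b) ^ (k - 1) := by
          rw [Finset.prod_congr rfl (fun t ht => ?_), Finset.prod_const,
            Finset.card_erase_of_mem (Finset.mem_univ t₀), Finset.card_univ, Fintype.card_fin]
          have htne : t ≠ t₀ := (Finset.mem_erase.mp ht).1
          simp [htne]
        rw [h1, h2, mul_comm]

lemma marg_two {k : ℕ} (S : Finset ι) (σ x y : ι → ℝ) {t₀ t₁ : Fin k} (hne : t₀ ≠ t₁) :
    ∑ g ∈ Fintype.piFinset (fun _ : Fin k => S), (∏ t, σ (g t)) * (x (g t₀) * y (g t₁))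
      = (∑ b ∈ S, σ b) ^ (k - 2) * ((∑ b ∈ S, σ b * x b) * (∑ b ∈ S, σ b * y b)) := by
  have hterm : ∀ g : Fin k → ι, (∏ t, σ (g t)) * (x (g t₀) * y (g t₁))
      = ∏ t, (σ (g t) * ((if t = t₀ then x (g t) else 1) * (if t = t₁ then y (g t) else 1))) := by
    intro g
    rw [Finset.prod_mul_distrib, Finset.prod_mul_distrib,
      Finset.prod_ite_eq' Finset.univ t₀ (fun t => x (g t)),
      Finset.prod_ite_eq' Finset.univ t₁ (fun t => y (g t)),
      if_pos (Finset.mem_univ _), if_pos (Finset.mem_univ _)]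
  have ht₁mem : t₁ ∈ Finset.univ.erase t₀ := Finset.mem_erase.mpr ⟨hne.symm, Finset.mem_univ _⟩
  calc ∑ g ∈ Fintype.piFinset (fun _ : Fin k => S), (∏ t, σ (g t)) * (x (g t₀) * y (g t₁))
      = ∑ g ∈ Fintype.piFinset (fun _ : Fin k => S),
          ∏ t, (σ (g t) * ((if t = t₀ then x (g t) else 1) * (if t = t₁ then y (g t) else 1))) :=
        Finset.sum_congr rfl fun g _ => hterm g
    _ = ∏ t : Fin k, ∑ b ∈ S,
          (σ b * ((if t = t₀ then x b else 1) * (if t = t₁ then y b else 1))) :=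
        (Finset.prod_univ_sum (fun _ => S)
          (fun t b => σ b * ((if t = t₀ then x b else 1) * (if t = t₁ then y b else 1)))).symm
    _ = (∑ b ∈ S, σ b) ^ (k - 2) * ((∑ b ∈ S, σ b * x b) * (∑ b ∈ S, σ b * y b)) := by
        rw [← Finset.mul_prod_erase Finset.univ _ (Finset.mem_univ t₀),
          ← Finset.mul_prod_erase _ _ ht₁mem]
        have h0 : ∑ b ∈ S, σ b * ((if t₀ = t₀ then x b else 1) * (if t₀ = t₁ then y b else 1))
            = ∑ b ∈ S, σ b * x b := by simp [hne]
        have h1 : ∑ b ∈ S, σ b * ((if t₁ = t₀ then x b else 1) * (if t₁ = t₁ then y b else 1))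
            = ∑ b ∈ S, σ b * y b := by simp [hne.symm]
        have h2 : ∏ t ∈ (Finset.univ.erase t₀).erase t₁,
            (∑ b ∈ S, σ b * ((if t = t₀ then x b else 1) * (if t = t₁ then y b else 1)))
            = (∑ b ∈ S, σ b) ^ (k - 2) := by
          rw [Finset.prod_congr rfl (fun t ht => ?_), Finset.prod_const,
            Finset.card_erase_of_mem ht₁mem, Finset.card_erase_of_mem (Finset.mem_univ t₀),
            Finset.card_univ, Fintype.card_fin]
          · rfl
          have htne1 : t ≠ t₁ := (Finset.mem_erase.mp ht).1
          have htne0 : t ≠ t₀ := (Finset.mem_erase.mp (Finset.mem_erase.mp ht).2).1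
          simp [htne0, htne1]
        rw [h0, h1, h2]
        ring

lemma marg_F [DecidableEq ι] {k : ℕ} (S : Finset ι) (σ : ι → ℝ) {t₀ t₁ : Fin k}
    (hne : t₀ ≠ t₁) (F : ι → ι → ℝ) :
    ∑ g ∈ Fintype.piFinset (fun _ : Fin k => S), (∏ t, σ (g t)) * F (g t₀) (g t₁)
      = (∑ b ∈ S, σ b) ^ (k - 2) * ∑ a ∈ S, ∑ c ∈ S, σ a * σ c * F a c := by
  have collapse : ∀ g : Fin k → ι, g t₀ ∈ S → g t₁ ∈ S →
      (∑ a ∈ S, ∑ c ∈ S,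
        ((∏ t, σ (g t)) * ((if g t₀ = a then 1 else 0) * (if g t₁ = c then 1 else 0))) * F a c)
      = (∏ t, σ (g t)) * F (g t₀) (g t₁) := by
    intro g h0 h1
    simp only [mul_ite, ite_mul, one_mul, zero_mul, mul_one, mul_zero,
      Finset.sum_ite_irrel, Finset.sum_const_zero, Finset.sum_ite_eq, h0, h1, if_true]
  calc ∑ g ∈ Fintype.piFinset (fun _ : Fin k => S), (∏ t, σ (g t)) * F (g t₀) (g t₁)
      = ∑ g ∈ Fintype.piFinset (fun _ : Fin k => S), ∑ a ∈ S, ∑ c ∈ S,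
          ((∏ t, σ (g t)) * ((if g t₀ = a then 1 else 0) * (if g t₁ = c then 1 else 0))) * F a c :=
        Finset.sum_congr rfl fun g hg =>
          (collapse g (Fintype.mem_piFinset.mp hg t₀) (Fintype.mem_piFinset.mp hg t₁)).symm
    _ = ∑ a ∈ S, ∑ c ∈ S, ∑ g ∈ Fintype.piFinset (fun _ : Fin k => S),
          ((∏ t, σ (g t)) * ((if g t₀ = a then 1 else 0) * (if g t₁ = c then 1 else 0))) * F a c := by
        rw [Finset.sum_comm]
        exact Finset.sum_congr rfl fun a _ => Finset.sum_comm
    _ = ∑ a ∈ S, ∑ c ∈ S, ((∑ b ∈ S, σ b) ^ (k - 2) * (σ a * σ c)) * F a c := by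
        refine Finset.sum_congr rfl fun a ha => Finset.sum_congr rfl fun c hc => ?_
        rw [← Finset.sum_mul,
          marg_two S σ (fun u => if u = a then 1 else 0) (fun u => if u = c then 1 else 0) hne]
        have e1 : ∑ b ∈ S, σ b * (if b = a then 1 else 0) = σ a := by
          simp only [mul_ite, mul_one, mul_zero]
          rw [Finset.sum_ite_eq' S a σ, if_pos ha]
        have e2 : ∑ b ∈ S, σ b * (if b = c then 1 else 0) = σ c := by
          simp only [mul_ite, mul_one, mul_zero]
          rw [Finset.sum_ite_eq' S c σ, if_pos hc]
        rw [e1, e2]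
    _ = (∑ b ∈ S, σ b) ^ (k - 2) * ∑ a ∈ S, ∑ c ∈ S, σ a * σ c * F a c := by
        rw [Finset.mul_sum]
        refine Finset.sum_congr rfl fun a _ => ?_
        rw [Finset.mul_sum]
        exact Finset.sum_congr rfl fun c _ => by ring


lemma key_quad {H : Type*} [NormedAddCommGroup H] [InnerProductSpace ℝ H] {m : ℕ}
    {B : Set H} (hBunit : ∀ b ∈ B, ‖b‖ = 1) {k : ℕ} (hk : 1 < k)
    {α β : ℝ} (hα : 0 < α)
    (Φ : H →ₗ[ℝ] EuclideanSpace ℝ (Fin m))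
    (hRIPa : ∀ u ∈ simpleSet B k, α * ‖u‖ ≤ ‖Φ u‖)
    (hRIPb : ∀ b ∈ B, ‖Φ b‖ ≤ β)
    {S : Finset H} (hS : ↑S ⊆ B) {σ : H → ℝ} (hσ : ∀ b ∈ S, 0 ≤ σ b)
    {v : H} (hv : v = ∑ b ∈ S, σ b • b) (hΦv : Φ v = 0) :
    ((k : ℝ) - 1) * (α ^ 2 * ‖v‖ ^ 2) ≤ (β ^ 2 - α ^ 2) * (∑ b ∈ S, σ b) ^ 2 := by
  classical
  set F : H → H → ℝ := fun a c => ⟪Φ a, Φ c⟫ - α ^ 2 * ⟪a, c⟫ with hF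
  set s := ∑ b ∈ S, σ b with hsdef
  have hs0 : 0 ≤ s := Finset.sum_nonneg hσ
  by_cases hs : s = 0
  · have hz : ∀ b ∈ S, σ b = 0 := (Finset.sum_eq_zero_iff_of_nonneg hσ).mp hs
    have hv0 : v = 0 := by
      rw [hv]; exact Finset.sum_eq_zero fun b hb => by rw [hz b hb, zero_smul]
    rw [hv0, hs]
    simp
  -- pointwise nonnegativity
  have hpt : ∀ g ∈ Fintype.piFinset (fun _ : Fin k => S),
      0 ≤ ∑ t₀ : Fin k, ∑ t₁ : Fin k, F (g t₀) (g t₁) := by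
    intro g hg
    have hgS : ∀ t, g t ∈ S := fun t => Fintype.mem_piFinset.mp hg t
    set u : H := ∑ t : Fin k, g t with hu
    have huA : u ∈ simpleSet B k :=
      ⟨fun _ => 1, fun t => g t, fun _ => zero_le_one, fun t => hS (hgS t), by simp [hu]⟩
    have h1 : α * ‖u‖ ≤ ‖Φ u‖ := hRIPa u huA
    have h2 : α ^ 2 * ‖u‖ ^ 2 ≤ ‖Φ u‖ ^ 2 := by
      have h2' := pow_le_pow_left₀ (mul_nonneg hα.le (norm_nonneg u)) h1 2
      rwa [mul_pow] at h2'
    have e1 : ⟪Φ u, Φ u⟫ = ∑ t₀ : Fin k, ∑ t₁ : Fin k, ⟪Φ (g t₀), Φ (g t₁)⟫ := by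
      rw [hu, map_sum, sum_inner]
      exact Finset.sum_congr rfl fun t₀ _ => inner_sum _ _ _
    have e2 : ⟪u, u⟫ = ∑ t₀ : Fin k, ∑ t₁ : Fin k, ⟪(g t₀ : H), g t₁⟫ := by
      rw [hu, sum_inner]
      exact Finset.sum_congr rfl fun t₀ _ => inner_sum _ _ _
    have e3 : ∑ t₀ : Fin k, ∑ t₁ : Fin k, F (g t₀) (g t₁)
        = ‖Φ u‖ ^ 2 - α ^ 2 * ‖u‖ ^ 2 := by
      rw [← real_inner_self_eq_norm_sq, ← real_inner_self_eq_norm_sq, e1, e2]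
      rw [Finset.mul_sum, ← Finset.sum_sub_distrib]
      refine Finset.sum_congr rfl fun t₀ _ => ?_
      rw [Finset.mul_sum, ← Finset.sum_sub_distrib]
    rw [e3]
    linarith
  have htot : 0 ≤ ∑ g ∈ Fintype.piFinset (fun _ : Fin k => S),
      (∏ t, σ (g t)) * (∑ t₀ : Fin k, ∑ t₁ : Fin k, F (g t₀) (g t₁)) :=
    Finset.sum_nonneg fun g hg => mul_nonneg
      (Finset.prod_nonneg fun t _ => hσ _ (Fintype.mem_piFinset.mp hg t)) (hpt g hg)
  -- identity
  have hiden : ∑ g ∈ Fintype.piFinset (fun _ : Fin k => S),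
      (∏ t, σ (g t)) * (∑ t₀ : Fin k, ∑ t₁ : Fin k, F (g t₀) (g t₁))
      = (k : ℝ) * (s ^ (k - 1) * (∑ b ∈ S, σ b * F b b)
          + ((k : ℝ) - 1) * (s ^ (k - 2) * ∑ a ∈ S, ∑ c ∈ S, σ a * σ c * F a c)) := by
    calc ∑ g ∈ Fintype.piFinset (fun _ : Fin k => S),
        (∏ t, σ (g t)) * (∑ t₀ : Fin k, ∑ t₁ : Fin k, F (g t₀) (g t₁))
        = ∑ g ∈ Fintype.piFinset (fun _ : Fin k => S),
            ∑ t₀ : Fin k, ∑ t₁ : Fin k, (∏ t, σ (g t)) * F (g t₀) (g t₁) := by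
          simp only [Finset.mul_sum]
      _ = ∑ t₀ : Fin k, ∑ t₁ : Fin k, ∑ g ∈ Fintype.piFinset (fun _ : Fin k => S),
            (∏ t, σ (g t)) * F (g t₀) (g t₁) := by
          rw [Finset.sum_comm]
          exact Finset.sum_congr rfl fun t₀ _ => Finset.sum_comm
      _ = ∑ t₀ : Fin k, (s ^ (k - 1) * (∑ b ∈ S, σ b * F b b)
            + ((k : ℝ) - 1) * (s ^ (k - 2) * ∑ a ∈ S, ∑ c ∈ S, σ a * σ c * F a c)) := by
          refine Finset.sum_congr rfl fun t₀ _ => ?_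
          rw [← Finset.add_sum_erase _ _ (Finset.mem_univ t₀)]
          congr 1
          · exact marg_one S σ (fun a => F a a) t₀
          · rw [Finset.sum_congr rfl
              (fun t₁ ht₁ => marg_F S σ (Ne.symm (Finset.mem_erase.mp ht₁).1) F),
              Finset.sum_const, Finset.card_erase_of_mem (Finset.mem_univ t₀),
              Finset.card_univ, Fintype.card_fin, nsmul_eq_mul, Nat.cast_sub hk.le,
              Nat.cast_one]
      _ = (k : ℝ) * (s ^ (k - 1) * (∑ b ∈ S, σ b * F b b)
            + ((k : ℝ) - 1) * (s ^ (k - 2) * ∑ a ∈ S, ∑ c ∈ S, σ a * σ c * F a c)) := by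
          rw [Finset.sum_const, Finset.card_univ, Fintype.card_fin, nsmul_eq_mul]
  -- value of Q
  have hΦv2 : ⟪Φ v, Φ v⟫ = ∑ a ∈ S, ∑ c ∈ S, σ a * σ c * ⟪Φ a, Φ c⟫ := by
    rw [hv, map_sum, sum_inner]
    refine Finset.sum_congr rfl fun a _ => ?_
    rw [map_smul, real_inner_smul_left, inner_sum, Finset.mul_sum]
    refine Finset.sum_congr rfl fun c _ => ?_
    rw [map_smul, real_inner_smul_right]; ring
  have hv2 : ⟪v, v⟫ = ∑ a ∈ S, ∑ c ∈ S, σ a * σ c * ⟪a, c⟫ := by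
    rw [hv, sum_inner]
    refine Finset.sum_congr rfl fun a _ => ?_
    rw [real_inner_smul_left, inner_sum, Finset.mul_sum]
    refine Finset.sum_congr rfl fun c _ => ?_
    rw [real_inner_smul_right]; ring
  have hQ : ∑ a ∈ S, ∑ c ∈ S, σ a * σ c * F a c = -(α ^ 2 * ‖v‖ ^ 2) := by
    have hq1 : ∑ a ∈ S, ∑ c ∈ S, σ a * σ c * F a c
        = ⟪Φ v, Φ v⟫ - α ^ 2 * ⟪v, v⟫ := by
      rw [hΦv2, hv2, Finset.mul_sum, ← Finset.sum_sub_distrib]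
      refine Finset.sum_congr rfl fun a _ => ?_
      rw [Finset.mul_sum, ← Finset.sum_sub_distrib]
      refine Finset.sum_congr rfl fun c _ => ?_
      simp only [hF]; ring
    rw [hq1, hΦv, inner_zero_left, real_inner_self_eq_norm_sq]
    ring
  -- bound on D
  have hDle : ∑ b ∈ S, σ b * F b b ≤ (β ^ 2 - α ^ 2) * s := by
    have hb1 : ∀ b ∈ S, σ b * F b b ≤ σ b * (β ^ 2 - α ^ 2) := by
      intro b hb
      have hbB := hS hb
      have h3 : ‖Φ b‖ ^ 2 ≤ β ^ 2 := by nlinarith [hRIPb b hbB, norm_nonneg (Φ b)]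
      have h4 : F b b ≤ β ^ 2 - α ^ 2 := by
        simp only [hF]
        rw [real_inner_self_eq_norm_sq, real_inner_self_eq_norm_sq, hBunit b hbB]
        nlinarith
      exact mul_le_mul_of_nonneg_left h4 (hσ b hb)
    calc ∑ b ∈ S, σ b * F b b ≤ ∑ b ∈ S, σ b * (β ^ 2 - α ^ 2) := Finset.sum_le_sum hb1
      _ = (β ^ 2 - α ^ 2) * s := by rw [← Finset.sum_mul, hsdef]; ring
  -- combine
  have hkpos : (0 : ℝ) < k := by exact_mod_cast Nat.zero_lt_of_lt hk
  rw [hiden] at htot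
  have hE : 0 ≤ s ^ (k - 1) * (∑ b ∈ S, σ b * F b b)
      + ((k : ℝ) - 1) * (s ^ (k - 2) * ∑ a ∈ S, ∑ c ∈ S, σ a * σ c * F a c) := by
    nlinarith [htot, hkpos]
  rw [hQ] at hE
  have hspos : 0 < s := lt_of_le_of_ne hs0 (Ne.symm hs)
  have hspow : 0 < s ^ (k - 2) := pow_pos hspos _
  have hsk1 : s ^ (k - 1) = s ^ (k - 2) * s := by
    rw [← pow_succ]
    congr 1
    omega
  rw [hsk1] at hE
  have hsd : s * (∑ b ∈ S, σ b * F b b) ≤ s * ((β ^ 2 - α ^ 2) * s) :=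
    mul_le_mul_of_nonneg_left hDle hs0
  have h9 : s ^ (k - 2) * (s * (∑ b ∈ S, σ b * F b b))
      ≤ s ^ (k - 2) * (s * ((β ^ 2 - α ^ 2) * s)) :=
    mul_le_mul_of_nonneg_left hsd hspow.le
  have final' : (((k : ℝ) - 1) * (α ^ 2 * ‖v‖ ^ 2)) * s ^ (k - 2)
      ≤ ((β ^ 2 - α ^ 2) * s ^ 2) * s ^ (k - 2) := by
    nlinarith [hE, h9]
  exact (mul_le_mul_iff_of_pos_right hspow).mp final'

end WRIPaux

set_option maxHeartbeats 2000000 in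
open WRIPaux in
/-- Weaken-RIP implies exact recovery of simple elements from noiseless measurements. -/
theorem weakenRIP_exact_recovery
    {H : Type*} [NormedAddCommGroup H] [InnerProductSpace ℝ H] [FiniteDimensional ℝ H]
    {m : ℕ} (B : Set H)
    (hBsym : ∀ b ∈ B, -b ∈ B) (hBspan : Spans B) (hBunit : ∀ b ∈ B, ‖b‖ = 1)
    (k : ℕ) (hk : 1 < k) (L : ℝ) (hL : 0 < L)
    (hCS : IsCSSpace B (simpleSet B k) L)
    (α β : ℝ) (hα : 0 < α) (hβ : 0 < β) (hαβ : α ≤ β)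
    (Φ : H →ₗ[ℝ] EuclideanSpace ℝ (Fin m))
    (hRIPa : ∀ u ∈ simpleSet B k, α * ‖u‖ ≤ ‖Φ u‖)
    (hRIPb : ∀ b ∈ B, ‖Φ b‖ ≤ β)
    (hρ : ∃ ρ : ℝ, Real.sqrt ((β ^ 2 - α ^ 2) / (α ^ 2 * ((k : ℝ) - 1))) < ρ ∧
      ρ < 1 / (4 * L)) :
    ∀ xnat ∈ simpleSet B k, ∀ xstar : H,
      Φ xstar = Φ xnat →
      (∀ x : H, Φ x = Φ xnat → atomNorm B xstar ≤ atomNorm B x) →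
      xstar = xnat := by
  classical
  intro xnat hxnat xstar hΦeq hmin
  obtain ⟨ρ, hρ1, hρ2⟩ := hρ
  suffices hsuff : xstar - xnat = 0 by
    have := sub_eq_zero.mp hsuff
    exact this
  obtain ⟨v, hvdef⟩ : ∃ v : H, v = xstar - xnat := ⟨_, rfl⟩
  rw [← hvdef]
  have hρ0 : 0 < ρ := lt_of_le_of_lt (Real.sqrt_nonneg _) hρ1
  have hΦv : Φ v = 0 := by rw [hvdef, map_sub, hΦeq, sub_self]
  have hk1 : (1 : ℝ) < (k : ℝ) := by exact_mod_cast hk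
  have ht0 : 0 ≤ atomNorm B v := atomNorm_nonneg B v
  -- the null space bound
  have hnv : ‖v‖ ≤ ρ * atomNorm B v := by
    refine le_of_forall_pos_le_add fun δ hδ => ?_
    obtain ⟨S, σ, hS, hσ, hveq, hslt⟩ := exists_decomp_lt hBspan v (div_pos hδ hρ0)
    have hkey := key_quad hBunit hk hα Φ hRIPa hRIPb hS hσ hveq hΦv
    have hs0 : 0 ≤ ∑ b ∈ S, σ b := Finset.sum_nonneg hσ
    have hden : 0 < α ^ 2 * ((k : ℝ) - 1) := by nlinarith [pow_pos hα 2]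
    have harg : 0 ≤ (β ^ 2 - α ^ 2) / (α ^ 2 * ((k : ℝ) - 1)) :=
      div_nonneg (by nlinarith) hden.le
    have h2 : ‖v‖ ^ 2 ≤ ((β ^ 2 - α ^ 2) / (α ^ 2 * ((k : ℝ) - 1))) * (∑ b ∈ S, σ b) ^ 2 := by
      rw [div_mul_eq_mul_div, le_div_iff₀ hden]
      nlinarith [hkey]
    have h3 : ‖v‖ ≤ Real.sqrt ((β ^ 2 - α ^ 2) / (α ^ 2 * ((k : ℝ) - 1))) * (∑ b ∈ S, σ b) := by
      have h4 : ‖v‖ ^ 2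
          ≤ (Real.sqrt ((β ^ 2 - α ^ 2) / (α ^ 2 * ((k : ℝ) - 1))) * (∑ b ∈ S, σ b)) ^ 2 := by
        rw [mul_pow, Real.sq_sqrt harg]
        exact h2
      have h5 := Real.sqrt_le_sqrt h4
      rwa [Real.sqrt_sq (norm_nonneg v),
        Real.sqrt_sq (mul_nonneg (Real.sqrt_nonneg _) hs0)] at h5
    calc ‖v‖ ≤ Real.sqrt ((β ^ 2 - α ^ 2) / (α ^ 2 * ((k : ℝ) - 1))) * (∑ b ∈ S, σ b) := h3
      _ ≤ ρ * (∑ b ∈ S, σ b) := mul_le_mul_of_nonneg_right hρ1.le hs0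
      _ ≤ ρ * (atomNorm B v + δ / ρ) := mul_le_mul_of_nonneg_left hslt.le hρ0.le
      _ = ρ * atomNorm B v + δ := by
          rw [mul_add, mul_comm ρ (δ / ρ), div_mul_cancel₀ δ hρ0.ne']
  -- the CS-space bound
  obtain ⟨-, hCS2⟩ := hCS
  obtain ⟨z₁, z₂, hz, hz1, hz2⟩ := hCS2 xnat hxnat v
  have hmin' : atomNorm B xstar ≤ atomNorm B xnat := hmin xnat rfl
  have hxv : xstar = xnat + v := by rw [hvdef]; abel
  have hxs : xnat + z₁ = xstar + -z₂ := by rw [hxv, hz]; abel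
  have h5 : atomNorm B (xnat + z₁) ≤ atomNorm B xstar + atomNorm B z₂ := by
    rw [hxs]
    exact le_trans (atomNorm_add_le hBspan _ _)
      (by linarith [atomNorm_neg_le hBsym hBspan z₂])
  have h6 : atomNorm B z₁ ≤ L * ‖v‖ := by
    rw [hz1] at h5
    linarith
  have h7 : atomNorm B v ≤ 2 * (L * ‖v‖) := by
    have h7' := atomNorm_add_le hBspan z₁ z₂
    rw [← hz] at h7'
    linarith
  have h8 : ρ * (4 * L) < 1 := by
    rw [lt_div_iff₀ (by positivity)] at hρ2
    linarith
  have hc3 : 2 * L * ρ < 1 / 2 := by linarith [h8]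
  have ht : atomNorm B v = 0 := by
    generalize hgen : atomNorm B v = t at hnv h7 ht0
    have hc1 : (2 * L) * ‖v‖ ≤ (2 * L) * (ρ * t) :=
      mul_le_mul_of_nonneg_left hnv (by positivity)
    have ht2 : t ≤ 2 * L * ρ * t := by linarith
    have hle : t ≤ 0 := by nlinarith [ht2, hc3, ht0]
    linarith
  have hn0 : ‖v‖ ≤ 0 := by
    rw [ht, mul_zero] at hnv
    exact hnv
  exact norm_le_zero_iff.mp hn0
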